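/- Let p ∈ ℕ be even with p ≥ 2. Define F : ℝ^{p+2} → ℝ by F(x, y, t₁, …, t_p) = t_p + (max(y, 0))^{p+2}. Then F is differentiable at every point a = (x, y, t₁, …, t_p) ∈ ℝ^{p+2}, and its Fréchet derivative satisfies dF(a)(X(a)) = 0 and dF(a)(Y(a)) = x^p/p! + (p+2)(max(y, 0))^{p+1} ≥ 0. -/

import Mathlib

/-- The filiform horizontal vector field `X = ∂_x`, viewed as a map `ℝ^{p+2} → ℝ^{p+2}`:
`X(a) = e₁`. -/
def filiformX (p : ℕ) : (Fin (p + 2) → ℝ) → (Fin (p + 2) → ℝ) :=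
  fun _ i => if (i : ℕ) = 0 then 1 else 0

/-- The filiform horizontal vector field `Y = ∂_y + Σ_{k=1}^p (x^k/k!) ∂_{t_k}`, viewed
as a map `ℝ^{p+2} → ℝ^{p+2}`: `Y(a) = e₂ + Σ_{k=1}^p (a₁^k/k!) e_{2+k}`. -/
noncomputable def filiformY (p : ℕ) : (Fin (p + 2) → ℝ) → (Fin (p + 2) → ℝ) :=
  fun a i =>
    if (i : ℕ) = 0 then 0
    else if (i : ℕ) = 1 then 1
    else (a 0) ^ ((i : ℕ) - 1) / (Nat.factorial ((i : ℕ) - 1) : ℝ)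

lemma hasDerivAt_maxpow (n : ℕ) (hn : 2 ≤ n) (x : ℝ) :
    HasDerivAt (fun y : ℝ => max y 0 ^ n) (n * max x 0 ^ (n - 1)) x := by
  rcases lt_trichotomy x 0 with hx | hx | hx
  · have h0 : (n : ℝ) * max x 0 ^ (n - 1) = 0 := by
      rw [max_eq_right hx.le, zero_pow (by omega), mul_zero]
    rw [h0]
    have : HasDerivAt (fun _ : ℝ => (0 : ℝ)) 0 x := hasDerivAt_const x 0
    refine this.congr_of_eventuallyEq ?_
    filter_upwards [eventually_lt_nhds hx] with y hy
    rw [max_eq_right hy.le, zero_pow (by omega)]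
  · subst hx
    have h0 : (n : ℝ) * max (0:ℝ) 0 ^ (n - 1) = 0 := by
      simp [zero_pow (show n - 1 ≠ 0 by omega)]
    rw [h0, hasDerivAt_iff_isLittleO]
    simp only [sub_zero, smul_zero, max_self, zero_pow (show n ≠ 0 by omega), sub_zero]
    rw [Asymptotics.isLittleO_iff]
    intro ε hε
    have : ∀ᶠ y : ℝ in nhds 0, |y| < min ε 1 := by
      have := Metric.ball_mem_nhds (0:ℝ) (lt_min hε one_pos)
      filter_upwards [this] with y hy
      simpa [Real.dist_eq] using hy
    filter_upwards [this] with y hy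
    have h1 : |y| ≤ 1 := le_of_lt (lt_of_lt_of_le hy (min_le_right _ _))
    have h2 : |y| ≤ ε := le_of_lt (lt_of_lt_of_le hy (min_le_left _ _))
    have hm : |max y 0| ≤ |y| := by
      rcases le_total y 0 with h | h
      · simp [max_eq_right h]
      · simp [max_eq_left h]
    calc ‖max y 0 ^ n‖ = |max y 0| ^ n := by rw [Real.norm_eq_abs, abs_pow]
      _ ≤ |y| ^ n := pow_le_pow_left₀ (abs_nonneg _) hm n
      _ ≤ |y| ^ 2 := pow_le_pow_of_le_one (abs_nonneg _) h1 hn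
      _ = |y| * |y| := sq |y|
      _ ≤ ε * |y| := mul_le_mul_of_nonneg_right h2 (abs_nonneg _)
      _ = ε * ‖y‖ := by rw [Real.norm_eq_abs]
  · have : HasDerivAt (fun y : ℝ => y ^ n) (n * x ^ (n - 1)) x := hasDerivAt_pow n x
    rw [max_eq_left hx.le]
    refine this.congr_of_eventuallyEq ?_
    filter_upwards [eventually_gt_nhds hx] with y hy
    rw [max_eq_left hy.le]

/-- Let `p` be even, `p ≥ 2`, and
`F(x, y, t₁, …, t_p) = t_p + (max(y,0))^{p+2}`.  Then `F` is differentiable at every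
point `a`, with `dF(a)(X(a)) = 0` and
`dF(a)(Y(a)) = x^p/p! + (p+2)(max(y,0))^{p+1} ≥ 0`. -/
theorem filiform_counterexample_derivatives (p : ℕ) (hpe : Even p) (hp : 2 ≤ p)
    (F : (Fin (p + 2) → ℝ) → ℝ)
    (hF : ∀ a, F a = a ⟨p + 1, by omega⟩ + max (a 1) 0 ^ (p + 2))
    (a : Fin (p + 2) → ℝ) :
    DifferentiableAt ℝ F a ∧
    fderiv ℝ F a (filiformX p a) = 0 ∧
    fderiv ℝ F a (filiformY p a)
      = (a 0) ^ p / (Nat.factorial p : ℝ) + (p + 2) * max (a 1) 0 ^ (p + 1) ∧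
    0 ≤ (a 0) ^ p / (Nat.factorial p : ℝ) + (p + 2) * max (a 1) 0 ^ (p + 1) := by
  have hFfun : F = fun a => a ⟨p + 1, by omega⟩ + max (a 1) 0 ^ (p + 2) := funext hF
  subst hFfun
  set c : ℝ := (p + 2) * max (a 1) 0 ^ (p + 1) with hc
  have hg : HasDerivAt (fun y : ℝ => max y 0 ^ (p + 2)) c (a 1) := by
    have := hasDerivAt_maxpow (p + 2) (by omega) (a 1)
    simpa [hc] using this
  have hproj1 : HasFDerivAt (fun b : Fin (p + 2) → ℝ => b 1)
      (ContinuousLinearMap.proj (R := ℝ) (φ := fun _ : Fin (p + 2) => ℝ) (1 : Fin (p + 2))) a :=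
    (ContinuousLinearMap.proj (R := ℝ) (φ := fun _ : Fin (p + 2) => ℝ) 1).hasFDerivAt
  have hcomp : HasFDerivAt (fun b : Fin (p + 2) → ℝ => max (b 1) 0 ^ (p + 2))
      (c • ContinuousLinearMap.proj (R := ℝ) (φ := fun _ : Fin (p + 2) => ℝ) (1 : Fin (p + 2))) a := by
    have := hg.comp_hasFDerivAt a hproj1; exact this
  have hprojp : HasFDerivAt (fun b : Fin (p + 2) → ℝ => b ⟨p + 1, by omega⟩)
      (ContinuousLinearMap.proj (R := ℝ) (φ := fun _ : Fin (p + 2) => ℝ) (⟨p + 1, by omega⟩ : Fin (p + 2))) a :=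
    (ContinuousLinearMap.proj (R := ℝ) (φ := fun _ : Fin (p + 2) => ℝ) ⟨p + 1, by omega⟩).hasFDerivAt
  have hFd : HasFDerivAt (fun b : Fin (p + 2) → ℝ => b ⟨p + 1, by omega⟩ + max (b 1) 0 ^ (p + 2))
      (ContinuousLinearMap.proj (R := ℝ) (φ := fun _ : Fin (p + 2) => ℝ) (⟨p + 1, by omega⟩ : Fin (p + 2)) + c • ContinuousLinearMap.proj (R := ℝ) (φ := fun _ : Fin (p + 2) => ℝ) (1 : Fin (p + 2))) a :=
    hprojp.add hcomp
  have hfd := hFd.fderiv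
  have hval1 : ((1 : Fin (p + 2)) : ℕ) = 1 := by
    simp [Fin.val_one]
  refine ⟨hFd.differentiableAt, ?_, ?_, ?_⟩
  · rw [hfd]
    simp [filiformX, hval1]
  · rw [hfd]
    simp only [ContinuousLinearMap.add_apply, ContinuousLinearMap.smul_apply,
      ContinuousLinearMap.proj_apply, smul_eq_mul]
    rw [show (filiformY p a ⟨p + 1, by omega⟩ : ℝ) = a 0 ^ p / (Nat.factorial p : ℝ) by
        simp [filiformY]; omega,
      show (filiformY p a 1 : ℝ) = 1 by simp [filiformY, hval1]]
    ring
  · apply add_nonneg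
    · apply div_nonneg (hpe.pow_nonneg _) (Nat.cast_nonneg _)
    · positivity
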